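/- Let G be a finite simple graph on n vertices whose degree sequence in non-increasing order d_1 ≥ ... ≥ d_n satisfies d_n ≥ 1 and d_{n−s+1} > s for every integer s with d_n ≤ s ≤ ⌊(n−1)/2⌋. If G is connected, then G has no cut vertex whose removal separates G into exactly two connected pieces; in particular, if additionally G is connected and n ≥ 3, then G is 2-connected whenever every cut-vertex separation has exactly two sides. -/

import Mathlib

open SimpleGraph

lemma key_aux {n : ℕ} (hn : 3 ≤ n) (G : SimpleGraph (Fin n)) [DecidableRel G.Adj]
    (d : Fin n → ℕ) (hd : Antitone d)
    (σ : Equiv.Perm (Fin n)) (hreal : ∀ i, G.degree (σ i) = d i)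
    (hbig : ∀ s : ℕ, (hs1 : 1 ≤ s) → (hs2 : d ⟨n - 1, Nat.sub_lt (by omega) Nat.one_pos⟩ ≤ s) →
      (hs3 : s ≤ (n - 1) / 2) → s < d ⟨n - s, Nat.sub_lt (by omega) (by omega)⟩)
    (v : Fin n) (A B : Set (Fin n)) (hA : A.Nonempty) (hB : B.Nonempty)
    (hdisj : Disjoint A B) (hunion : A ∪ B = ({v}ᶜ : Set (Fin n)))
    (hsep : ∀ a ∈ A, ∀ b ∈ B, ¬ G.Adj a b)
    (hle : (A.toFinite.toFinset).card ≤ (B.toFinite.toFinset).card) : False := by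
  classical
  set FA := A.toFinite.toFinset with hFA
  set FB := B.toFinite.toFinset with hFB
  set s := FA.card with hs
  have hvA : v ∉ A := by
    intro hv
    have : v ∈ ({v}ᶜ : Set (Fin n)) := hunion ▸ Set.mem_union_left _ hv
    simp at this
  have hs1 : 1 ≤ s := by
    obtain ⟨a, ha⟩ := hA
    have : a ∈ FA := Set.Finite.mem_toFinset _ |>.mpr ha
    exact Finset.card_pos.mpr ⟨a, this⟩
  -- cardinality sum
  have hcard : FA.card + FB.card = n - 1 := by
    have hdisjF : Disjoint FA FB := by
      rw [Finset.disjoint_left]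
      intro x hx hx'
      simp [hFA, hFB] at hx hx'
      exact hdisj.le_bot ⟨hx, hx'⟩
    have huF : FA ∪ FB = Finset.univ \ {v} := by
      ext x
      simp only [Finset.mem_union, Finset.mem_sdiff, Finset.mem_univ, Finset.mem_singleton,
        true_and, hFA, hFB, Set.Finite.mem_toFinset]
      constructor
      · intro h
        have : x ∈ A ∪ B := h
        rw [hunion] at this
        simpa using this
      · intro h
        have : x ∈ ({v}ᶜ : Set (Fin n)) := by simpa using h
        rw [← hunion] at this
        exact this
    have := Finset.card_union_of_disjoint hdisjF
    rw [huF] at this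
    simp [Finset.card_sdiff, Fintype.card_fin] at this
    omega
  have hs3 : s ≤ (n - 1) / 2 := by omega
  -- degree bound for vertices in A
  have hdeg : ∀ a ∈ A, G.degree a ≤ s := by
    intro a ha
    have haF : a ∈ FA := Set.Finite.mem_toFinset _ |>.mpr ha
    have hsub : G.neighborFinset a ⊆ insert v (FA.erase a) := by
      intro b hb
      rw [mem_neighborFinset] at hb
      by_cases hbv : b = v
      · simp [hbv]
      · have hbAB : b ∈ A ∪ B := by
          rw [hunion]; simpa using hbv
        cases hbAB with
        | inl h =>
          have : b ≠ a := fun h' => G.irrefl (h' ▸ hb)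
          exact Finset.mem_insert.mpr (Or.inr (Finset.mem_erase.mpr ⟨this, (Set.Finite.mem_toFinset _).mpr h⟩))
        | inr h => exact absurd hb (hsep a ha b h)
    calc G.degree a = (G.neighborFinset a).card := rfl
      _ ≤ (insert v (FA.erase a)).card := Finset.card_le_card hsub
      _ ≤ (FA.erase a).card + 1 := Finset.card_insert_le _ _
      _ = s - 1 + 1 := by rw [Finset.card_erase_of_mem haF]
      _ = s := by omega
  -- min degree ≤ s
  obtain ⟨a0, ha0⟩ := hA
  have hs2 : d ⟨n - 1, Nat.sub_lt (by omega) Nat.one_pos⟩ ≤ s := by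
    have h1 : d (σ.symm a0) ≤ s := by
      have := hreal (σ.symm a0)
      rw [Equiv.apply_symm_apply] at this
      rw [← this]; exact hdeg a0 ha0
    have h2 : d ⟨n - 1, Nat.sub_lt (by omega) Nat.one_pos⟩ ≤ d (σ.symm a0) := by
      apply hd
      have : (σ.symm a0).val ≤ n - 1 := by
        have := (σ.symm a0).isLt; omega
      exact this
    exact le_trans h2 h1
  -- pigeonhole: some index i ≤ n - s maps into A
  set S := FA.image (fun a => σ.symm a) with hS
  have hScard : S.card = s := by
    rw [hS, Finset.card_image_of_injective _ σ.symm.injective]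
  have hexists : ∃ i ∈ S, i.val ≤ n - s := by
    by_contra h
    push_neg at h
    have hsub : S.image Fin.val ⊆ Finset.Ioo (n - s) n := by
      intro x hx
      simp only [Finset.mem_image] at hx
      obtain ⟨i, hi, rfl⟩ := hx
      simp only [Finset.mem_Ioo]
      exact ⟨h i hi, i.isLt⟩
    have h1 : (S.image Fin.val).card = s := by
      rw [Finset.card_image_of_injective _ Fin.val_injective, hScard]
    have h2 : (Finset.Ioo (n - s) n).card = s - 1 := by
      rw [Nat.card_Ioo]; omega
    have := Finset.card_le_card hsub
    omega
  obtain ⟨i, hiS, hile⟩ := hexists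
  obtain ⟨a, haF, hai⟩ := Finset.mem_image.mp hiS
  have haA : a ∈ A := by simpa [hFA] using haF
  have hdi : d i ≤ s := by
    have := hreal i
    rw [← hai, Equiv.apply_symm_apply] at this
    rw [← hai, ← this]
    exact hdeg a haA
  have hdns : d ⟨n - s, Nat.sub_lt (by omega) (by omega)⟩ ≤ d i := by
    apply hd
    exact hile
  have := hbig s hs1 hs2 hs3
  omega

/-- If the non-increasing degree sequence `d` of a graph `G` on `n` vertices satisfies
`dₙ ≥ 1` and `d_{n-s+1} > s` for every `s` with `dₙ ≤ s ≤ ⌊(n-1)/2⌋`, then, if `G` is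
connected, no cut vertex of `G` separates it into exactly two pieces. -/
theorem stmt_12 {n : ℕ} (hn : 3 ≤ n) (G : SimpleGraph (Fin n)) [DecidableRel G.Adj]
    (d : Fin n → ℕ) (hd : Antitone d)
    (σ : Equiv.Perm (Fin n)) (hreal : ∀ i, G.degree (σ i) = d i)
    (hdn : 1 ≤ d ⟨n - 1, by omega⟩)
    (hbig : ∀ s : ℕ, (hs1 : 1 ≤ s) → (hs2 : d ⟨n - 1, by omega⟩ ≤ s) →
      (hs3 : s ≤ (n - 1) / 2) → s < d ⟨n - s, by omega⟩) :
    G.Connected →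
      ¬ ∃ (v : Fin n) (A B : Set (Fin n)), A.Nonempty ∧ B.Nonempty ∧ Disjoint A B ∧
        A ∪ B = ({v}ᶜ : Set (Fin n)) ∧ ∀ a ∈ A, ∀ b ∈ B, ¬ G.Adj a b := by
  intro _ ⟨v, A, B, hA, hB, hdisj, hunion, hsep⟩
  by_cases hle : (A.toFinite.toFinset).card ≤ (B.toFinite.toFinset).card
  · exact key_aux hn G d hd σ hreal hbig v A B hA hB hdisj hunion hsep hle
  · exact key_aux hn G d hd σ hreal hbig v B A hB hA hdisj.symm
      (by rw [Set.union_comm]; exact hunion)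
      (fun b hb a ha hadj => hsep a ha b hb hadj.symm)
      (le_of_not_ge hle)
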